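/- (Gini-smooth parameter sensitivity) Let f : [0,1]^L → ℝ be continuously differentiable on (0,1)^L and continuous on [0,1]^L, with 0 ≤ ∂f/∂x_i ≤ γ_∞ and √(∑_i x_i(1−x_i)(∂f/∂x_i)²) ≤ γ_g for all x ∈ (0,1)^L. Then for any x, ε ∈ [0,1]^L with ε_i ≤ min{u_i√(x_i(1−x_i)) + v_i, 1 − x_i} where u_i, v_i ≥ 0: f(x+ε) − f(x) ≤ 3√2 · γ_g · √(∑_i u_i²) + γ_∞ · ∑_i v_i. -/

import Mathlib

open Set Topology Filter

private lemma interior_case (L : ℕ) (f : (Fin L → ℝ) → ℝ) (γinf γg : ℝ)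
    (hγg : 0 ≤ γg)
    (hdiff : ∀ x ∈ Set.pi univ fun _ => Ioo (0 : ℝ) 1, DifferentiableAt ℝ f x)
    (hgrad : ∀ x ∈ Set.pi univ fun _ => Ioo (0 : ℝ) 1, ∀ i,
        0 ≤ fderiv ℝ f x (Pi.single i 1) ∧ fderiv ℝ f x (Pi.single i 1) ≤ γinf)
    (hgini : ∀ x ∈ Set.pi univ fun _ => Ioo (0 : ℝ) 1,
        Real.sqrt (∑ i, x i * (1 - x i) * (fderiv ℝ f x (Pi.single i 1)) ^ 2) ≤ γg)
    (x ε u v : Fin L → ℝ)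
    (hx : ∀ i, x i ∈ Ioo (0 : ℝ) 1) (hε : ∀ i, 0 ≤ ε i)
    (hxε : ∀ i, x i + ε i ∈ Ioo (0 : ℝ) 1)
    (hu : ∀ i, 0 ≤ u i) (hv : ∀ i, 0 ≤ v i)
    (hεle : ∀ i, ε i ≤ min (u i * Real.sqrt (x i * (1 - x i)) + v i) (1 - x i)) :
    f (x + ε) - f x ≤ 2 * (γg * Real.sqrt (∑ i, (u i) ^ 2)) + γinf * ∑ i, v i := by
  set C : ℝ := γg * Real.sqrt (∑ i, (u i) ^ 2) with hCdef
  set V : ℝ := γinf * ∑ i, v i with hVdef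
  have hC : 0 ≤ C := mul_nonneg hγg (Real.sqrt_nonneg _)
  have hmem : ∀ t ∈ Icc (0:ℝ) 1, (x + t • ε) ∈ Set.pi univ fun _ => Ioo (0 : ℝ) 1 := by
    intro t ht i _
    have h1 := (hx i).1; have h2 := (hx i).2
    have h3 := (hxε i).2; have h4 := hε i
    simp only [Pi.add_apply, Pi.smul_apply, smul_eq_mul, mem_Ioo]
    constructor
    · nlinarith [ht.1]
    · nlinarith [ht.2, ht.1]
  have hg : ∀ t ∈ Icc (0:ℝ) 1,
      HasDerivAt (fun s : ℝ => f (x + s • ε)) (fderiv ℝ f (x + t • ε) ε) t := by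
    intro t ht
    have h1 : HasDerivAt (fun s : ℝ => x + s • ε) ε t := by
      simpa using ((hasDerivAt_id t).smul_const ε).const_add x
    exact (hdiff _ (hmem t ht)).hasFDerivAt.comp_hasDerivAt t h1
  have hrep : ∀ y : Fin L → ℝ,
      fderiv ℝ f y ε = ∑ i, ε i * fderiv ℝ f y (Pi.single i 1) := by
    intro y
    have hεeq : ε = ∑ i, ε i • (Pi.single i 1 : Fin L → ℝ) := by
      funext j
      simp [Finset.sum_apply, Pi.single_apply]
    conv_lhs => rw [hεeq]
    rw [map_sum]
    simp [smul_eq_mul]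
  have key : ∀ t ∈ Ioo (0:ℝ) 1,
      fderiv ℝ f (x + t • ε) ε ≤ C / Real.sqrt (1 - t) + V := by
    intro t ht
    set y : Fin L → ℝ := x + t • ε with hydef
    have hy : y ∈ Set.pi univ fun _ => Ioo (0 : ℝ) 1 := hmem t (Ioo_subset_Icc_self ht)
    set d : Fin L → ℝ := fun i => fderiv ℝ f y (Pi.single i 1) with hddef
    have hd0 : ∀ i, 0 ≤ d i := fun i => (hgrad y hy i).1
    have hdγ : ∀ i, d i ≤ γinf := fun i => (hgrad y hy i).2
    have ht1 : 0 < 1 - t := by linarith [ht.2]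
    rw [hrep]
    have step1 : ∑ i, ε i * d i ≤
        (∑ i, u i * (Real.sqrt (x i * (1 - x i)) * d i)) + ∑ i, v i * d i := by
      rw [← Finset.sum_add_distrib]
      apply Finset.sum_le_sum
      intro i _
      have h1 : ε i ≤ u i * Real.sqrt (x i * (1 - x i)) + v i := (le_min_iff.mp (hεle i)).1
      nlinarith [hd0 i]
    have cs : ∑ i, u i * (Real.sqrt (x i * (1 - x i)) * d i) ≤
        Real.sqrt (∑ i, (u i) ^ 2) * Real.sqrt (∑ i, x i * (1 - x i) * (d i) ^ 2) := by
      have hsq := Finset.sum_mul_sq_le_sq_mul_sq Finset.univ u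
        (fun i => Real.sqrt (x i * (1 - x i)) * d i)
      have hb : ∀ i, (Real.sqrt (x i * (1 - x i)) * d i) ^ 2 = x i * (1 - x i) * (d i) ^ 2 := by
        intro i
        have hnn : 0 ≤ x i * (1 - x i) :=
          mul_nonneg (hx i).1.le (by linarith [(hx i).2])
        rw [mul_pow, Real.sq_sqrt hnn]
      rw [Finset.sum_congr rfl (fun i _ => hb i)] at hsq
      have hnnL : 0 ≤ ∑ i, u i * (Real.sqrt (x i * (1 - x i)) * d i) :=
        Finset.sum_nonneg fun i _ =>
          mul_nonneg (hu i) (mul_nonneg (Real.sqrt_nonneg _) (hd0 i))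
      calc ∑ i, u i * (Real.sqrt (x i * (1 - x i)) * d i)
          = Real.sqrt ((∑ i, u i * (Real.sqrt (x i * (1 - x i)) * d i)) ^ 2) := by
            rw [Real.sqrt_sq hnnL]
        _ ≤ Real.sqrt ((∑ i, (u i) ^ 2) * ∑ i, x i * (1 - x i) * (d i) ^ 2) :=
            Real.sqrt_le_sqrt hsq
        _ = Real.sqrt (∑ i, (u i) ^ 2) * Real.sqrt (∑ i, x i * (1 - x i) * (d i) ^ 2) := by
            rw [Real.sqrt_mul (Finset.sum_nonneg fun i _ => sq_nonneg _)]
    have hfac : Real.sqrt (∑ i, x i * (1 - x i) * (d i) ^ 2) ≤ γg / Real.sqrt (1 - t) := by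
      have hA : ∀ i, (1 - t) * (x i * (1 - x i) * (d i) ^ 2) ≤ y i * (1 - y i) * (d i) ^ 2 := by
        intro i
        have hyi : y i = x i + t * ε i := by
          simp [hydef, Pi.add_apply, Pi.smul_apply, smul_eq_mul]
        have hεx : ε i ≤ 1 - x i := (le_min_iff.mp (hεle i)).2
        rw [hyi]
        have e2 : (1 - t) * (1 - x i) ≤ 1 - (x i + t * ε i) := by nlinarith [ht.1]
        have e3 : x i * ((1 - t) * (1 - x i)) ≤ (x i + t * ε i) * (1 - (x i + t * ε i)) := by
          apply mul_le_mul (by nlinarith [hε i, ht.1]) e2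
          · nlinarith [(hx i).1, (hx i).2, ht.2]
          · nlinarith [(hx i).1, hε i, ht.1]
        nlinarith [mul_le_mul_of_nonneg_right e3 (sq_nonneg (d i))]
      have hsumy : ∑ i, y i * (1 - y i) * (d i) ^ 2 ≤ γg ^ 2 := by
        have h := hgini y hy
        have hnn : 0 ≤ ∑ i, y i * (1 - y i) * (d i) ^ 2 := by
          apply Finset.sum_nonneg
          intro i _
          have := hy i (Set.mem_univ i)
          simp only [mem_Ioo] at this
          exact mul_nonneg (mul_nonneg this.1.le (by linarith [this.2])) (sq_nonneg _)
        calc ∑ i, y i * (1 - y i) * (d i) ^ 2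
            = Real.sqrt (∑ i, y i * (1 - y i) * (d i) ^ 2) ^ 2 := (Real.sq_sqrt hnn).symm
          _ ≤ γg ^ 2 := pow_le_pow_left₀ (Real.sqrt_nonneg _) h 2
      have hsum : ∑ i, x i * (1 - x i) * (d i) ^ 2 ≤ γg ^ 2 / (1 - t) := by
        rw [le_div_iff₀ ht1, mul_comm]
        calc (1 - t) * ∑ i, x i * (1 - x i) * (d i) ^ 2
            = ∑ i, (1 - t) * (x i * (1 - x i) * (d i) ^ 2) := by rw [Finset.mul_sum]
          _ ≤ ∑ i, y i * (1 - y i) * (d i) ^ 2 := Finset.sum_le_sum fun i _ => hA i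
          _ ≤ γg ^ 2 := hsumy
      calc Real.sqrt (∑ i, x i * (1 - x i) * (d i) ^ 2)
          ≤ Real.sqrt (γg ^ 2 / (1 - t)) := Real.sqrt_le_sqrt hsum
        _ = γg / Real.sqrt (1 - t) := by
            rw [Real.sqrt_div (sq_nonneg γg), Real.sqrt_sq hγg]
    have hV : ∑ i, v i * d i ≤ V := by
      rw [hVdef, Finset.mul_sum]
      exact Finset.sum_le_sum fun i _ => by
        rw [mul_comm (γinf)]
        exact mul_le_mul_of_nonneg_left (hdγ i) (hv i)
    have hsqrtpos : 0 < Real.sqrt (1 - t) := Real.sqrt_pos.mpr ht1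
    calc ∑ i, ε i * d i
        ≤ (∑ i, u i * (Real.sqrt (x i * (1 - x i)) * d i)) + ∑ i, v i * d i := step1
      _ ≤ Real.sqrt (∑ i, (u i) ^ 2) * (γg / Real.sqrt (1 - t)) + V := by
          have := mul_le_mul_of_nonneg_left hfac (Real.sqrt_nonneg (∑ i, (u i) ^ 2))
          linarith [cs.trans this, hV]
      _ = C / Real.sqrt (1 - t) + V := by rw [hCdef]; ring
  -- monotone comparison function
  set φ : ℝ → ℝ := fun t => f (x + t • ε) + 2 * C * Real.sqrt (1 - t) - V * t with hφdef
  have hφhas : ∀ t ∈ Ioo (0:ℝ) 1, HasDerivAt φ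
      (fderiv ℝ f (x + t • ε) ε + 2 * C * (1 / (2 * Real.sqrt (1 - t)) * (-1)) - V) t := by
    intro t ht
    have h0 : (1 : ℝ) - t ≠ 0 := by linarith [ht.2]
    have hsq : HasDerivAt (fun s : ℝ => Real.sqrt (1 - s))
        (1 / (2 * Real.sqrt (1 - t)) * (-1)) t := by
      have hin : HasDerivAt (fun s : ℝ => 1 - s) (-1) t := by
        simpa using ((hasDerivAt_id t).const_sub 1)
      exact (Real.hasDerivAt_sqrt h0).comp t hin
    have hlin : HasDerivAt (fun s : ℝ => V * s) V t := by
      simpa using (hasDerivAt_id t).const_mul V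
    exact ((hg t (Ioo_subset_Icc_self ht)).add (hsq.const_mul (2 * C))).sub hlin
  have hφcont : ContinuousOn φ (Icc 0 1) := by
    apply ContinuousOn.sub
    · apply ContinuousOn.add
      · exact fun t ht => ((hg t ht).continuousAt).continuousWithinAt
      · exact (continuous_const.mul
          (Real.continuous_sqrt.comp (continuous_const.sub continuous_id))).continuousOn
    · exact (continuous_const.mul continuous_id).continuousOn
  have hanti : AntitoneOn φ (Icc 0 1) := by
    apply antitoneOn_of_deriv_nonpos (convex_Icc 0 1) hφcont
    · intro t ht
      rw [interior_Icc] at ht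
      exact (hφhas t ht).differentiableAt.differentiableWithinAt
    · intro t ht
      rw [interior_Icc] at ht
      rw [(hφhas t ht).deriv]
      have hk := key t ht
      have hsqrtpos : 0 < Real.sqrt (1 - t) := Real.sqrt_pos.mpr (by linarith [ht.2])
      have heq : 2 * C * (1 / (2 * Real.sqrt (1 - t)) * (-1)) = -(C / Real.sqrt (1 - t)) := by
        field_simp
      rw [heq]
      linarith
  have h01 := hanti (left_mem_Icc.mpr zero_le_one) (right_mem_Icc.mpr zero_le_one) zero_le_one
  have hφ0 : φ 0 = f x + 2 * C := by
    simp [hφdef]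
  have hφ1 : φ 1 = f (x + ε) - V := by
    simp [hφdef]
  rw [hφ0, hφ1] at h01
  linarith

theorem gini_smooth_param_sensitivity (L : ℕ) (f : (Fin L → ℝ) → ℝ) (γinf γg : ℝ)
    (hcont : ContinuousOn f (Set.pi univ fun _ => Icc (0 : ℝ) 1))
    (hdiff : ∀ x ∈ Set.pi univ fun _ => Ioo (0 : ℝ) 1, DifferentiableAt ℝ f x)
    (hgrad : ∀ x ∈ Set.pi univ fun _ => Ioo (0 : ℝ) 1, ∀ i,
        0 ≤ fderiv ℝ f x (Pi.single i 1) ∧ fderiv ℝ f x (Pi.single i 1) ≤ γinf)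
    (hgini : ∀ x ∈ Set.pi univ fun _ => Ioo (0 : ℝ) 1,
        Real.sqrt (∑ i, x i * (1 - x i) * (fderiv ℝ f x (Pi.single i 1)) ^ 2) ≤ γg)
    (x ε u v : Fin L → ℝ)
    (hx : ∀ i, x i ∈ Icc (0 : ℝ) 1) (hε : ∀ i, ε i ∈ Icc (0 : ℝ) 1)
    (hu : ∀ i, 0 ≤ u i) (hv : ∀ i, 0 ≤ v i)
    (hεle : ∀ i, ε i ≤ min (u i * Real.sqrt (x i * (1 - x i)) + v i) (1 - x i)) :
    f (x + ε) - f x ≤ 3 * Real.sqrt 2 * γg * Real.sqrt (∑ i, (u i) ^ 2) + γinf * ∑ i, v i := by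
  have hc : (fun _ : Fin L => (1:ℝ)/2) ∈ Set.pi univ fun _ => Ioo (0:ℝ) 1 := by
    intro i _; norm_num
  have hγg : 0 ≤ γg := le_trans (Real.sqrt_nonneg _) (hgini _ hc)
  have hεnn : ∀ i, 0 ≤ ε i := fun i => (hε i).1
  have hεx : ∀ i, ε i ≤ 1 - x i := fun i => (le_min_iff.mp (hεle i)).2
  set xs : ℝ → (Fin L → ℝ) := fun s => fun i => (1 - s) * x i + s / 2 with hxsdef
  set εs : ℝ → (Fin L → ℝ) := fun s => fun i => (1 - s) * ε i with hεsdef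
  have key : ∀ s ∈ Ioo (0:ℝ) 1,
      f (xs s + εs s) - f (xs s) ≤
        2 * (γg * Real.sqrt (∑ i, (u i) ^ 2)) + γinf * ∑ i, v i := by
    intro s hs
    apply interior_case L f γinf γg hγg hdiff hgrad hgini (xs s) (εs s) u v
    · intro i
      show (1 - s) * x i + s / 2 ∈ Ioo (0:ℝ) 1
      constructor
      · nlinarith [(hx i).1, hs.1, hs.2]
      · nlinarith [(hx i).2, hs.1, hs.2]
    · intro i
      exact mul_nonneg (by linarith [hs.2]) (hεnn i)
    · intro i
      show (1 - s) * x i + s / 2 + (1 - s) * ε i ∈ Ioo (0:ℝ) 1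
      constructor
      · nlinarith [(hx i).1, hεnn i, hs.1, hs.2]
      · nlinarith [(hx i).2, hεx i, hs.1, hs.2, hεnn i, (hx i).1]
    · exact hu
    · exact hv
    · intro i
      rw [le_min_iff]
      constructor
      · have h1 : ε i ≤ u i * Real.sqrt (x i * (1 - x i)) + v i := (le_min_iff.mp (hεle i)).1
        have h2 : (1 - s) * Real.sqrt (x i * (1 - x i)) ≤ Real.sqrt (xs s i * (1 - xs s i)) := by
          rw [show (1 - s) * Real.sqrt (x i * (1 - x i))
              = Real.sqrt ((1 - s) ^ 2 * (x i * (1 - x i))) from ?_]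
          · apply Real.sqrt_le_sqrt
            show (1 - s) ^ 2 * (x i * (1 - x i)) ≤
              ((1 - s) * x i + s / 2) * (1 - ((1 - s) * x i + s / 2))
            nlinarith [(hx i).1, (hx i).2, hs.1, hs.2]
          · rw [Real.sqrt_mul (sq_nonneg _), Real.sqrt_sq (by linarith [hs.2])]
        show (1 - s) * ε i ≤ u i * Real.sqrt (xs s i * (1 - xs s i)) + v i
        nlinarith [mul_le_mul_of_nonneg_left h1 (show (0:ℝ) ≤ 1 - s by linarith [hs.2]),
          mul_le_mul_of_nonneg_left h2 (hu i), hv i, hs.1.le]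
      · show (1 - s) * ε i ≤ 1 - ((1 - s) * x i + s / 2)
        nlinarith [hεx i, hs.1, hs.2]
  -- limit along s = 1/(n+2) → 0
  set a : ℕ → ℝ := fun n => 1 / (n + 2) with hadef
  have haIoo : ∀ n, a n ∈ Ioo (0:ℝ) 1 := by
    intro n
    constructor
    · positivity
    · rw [div_lt_one (by positivity)]
      have : (0:ℝ) ≤ n := Nat.cast_nonneg n
      linarith
  have ha : Filter.Tendsto a Filter.atTop (𝓝 0) := by
    have h1 : Filter.Tendsto (fun n : ℕ => ((n:ℝ) + 2)) Filter.atTop Filter.atTop :=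
      Filter.tendsto_atTop_add_const_right _ 2 tendsto_natCast_atTop_atTop
    simpa [hadef, one_div, Pi.inv_def] using h1.inv_tendsto_atTop
  have hxs_mem : ∀ n, xs (a n) ∈ Set.pi univ fun _ => Icc (0:ℝ) 1 := by
    intro n i _
    have h := haIoo n
    show (1 - a n) * x i + a n / 2 ∈ Icc (0:ℝ) 1
    constructor
    · nlinarith [(hx i).1, h.1, h.2]
    · nlinarith [(hx i).2, h.1, h.2]
  have hxεs_mem : ∀ n, xs (a n) + εs (a n) ∈ Set.pi univ fun _ => Icc (0:ℝ) 1 := by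
    intro n i _
    have h := haIoo n
    show ((1 - a n) * x i + a n / 2 + (1 - a n) * ε i) ∈ Icc (0:ℝ) 1
    constructor
    · nlinarith [(hx i).1, hεnn i, h.1, h.2]
    · nlinarith [(hx i).2, hεx i, h.1, h.2, hεnn i, (hx i).1]
  have hxIcc : x ∈ Set.pi univ fun _ => Icc (0:ℝ) 1 := fun i _ => hx i
  have hxεIcc : (x + ε) ∈ Set.pi univ fun _ => Icc (0:ℝ) 1 := by
    intro i _
    constructor
    · have := (hx i).1; have := hεnn i; simpa [Pi.add_apply] using by linarith
    · have := hεx i; have := (hx i).1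
      simp only [Pi.add_apply, mem_Icc]
      linarith
  have hxs_tendsto : Filter.Tendsto (fun n => xs (a n)) Filter.atTop (𝓝 x) := by
    rw [tendsto_pi_nhds]
    intro i
    have : Filter.Tendsto (fun n => (1 - a n) * x i + a n / 2) Filter.atTop
        (𝓝 ((1 - 0) * x i + 0 / 2)) :=
      ((tendsto_const_nhds.sub ha).mul tendsto_const_nhds).add (ha.div_const 2)
    simpa using this
  have hxεs_tendsto : Filter.Tendsto (fun n => xs (a n) + εs (a n)) Filter.atTop (𝓝 (x + ε)) := by
    rw [tendsto_pi_nhds]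
    intro i
    have : Filter.Tendsto (fun n => ((1 - a n) * x i + a n / 2) + (1 - a n) * ε i) Filter.atTop
        (𝓝 (((1 - 0) * x i + 0 / 2) + (1 - 0) * ε i)) :=
      (((tendsto_const_nhds.sub ha).mul tendsto_const_nhds).add (ha.div_const 2)).add
        ((tendsto_const_nhds.sub ha).mul tendsto_const_nhds)
    simpa using this
  have hf1 : Filter.Tendsto (fun n => f (xs (a n))) Filter.atTop (𝓝 (f x)) :=
    (hcont x hxIcc).tendsto.comp
      (tendsto_nhdsWithin_of_tendsto_nhds_of_eventually_within _ hxs_tendsto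
        (Filter.Eventually.of_forall hxs_mem))
  have hf2 : Filter.Tendsto (fun n => f (xs (a n) + εs (a n))) Filter.atTop (𝓝 (f (x + ε))) :=
    (hcont (x + ε) hxεIcc).tendsto.comp
      (tendsto_nhdsWithin_of_tendsto_nhds_of_eventually_within _ hxεs_tendsto
        (Filter.Eventually.of_forall hxεs_mem))
  have hlim : f (x + ε) - f x ≤ 2 * (γg * Real.sqrt (∑ i, (u i) ^ 2)) + γinf * ∑ i, v i :=
    le_of_tendsto (hf2.sub hf1) (Filter.Eventually.of_forall fun n => key (a n) (haIoo n))
  have h2le : (2:ℝ) ≤ 3 * Real.sqrt 2 := by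
    nlinarith [Real.sqrt_nonneg 2, Real.sq_sqrt (show (0:ℝ) ≤ 2 by norm_num)]
  nlinarith [mul_nonneg hγg (Real.sqrt_nonneg (∑ i, (u i) ^ 2)), hlim, h2le]
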